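/- Let P ≪ Q with r* = dP/dQ having finite variance under Q, let P_m, Q_n be empirical averages of m and n independent samples from P and Q respectively (P-samples independent of Q-samples). Define I_NWJ^{m,n} = E_{P_m}[log r* + 1] − E_{Q_n}[r*]. Then Var[I_NWJ^{m,n}] ≥ (exp(D_KL(P‖Q)) − 1)/n for all m. -/

import Mathlib

open MeasureTheory Real ProbabilityTheory

lemma abs_log_le_add_inv {s : ℝ} (hs : 0 ≤ s) : |Real.log s| ≤ s + s⁻¹ := by
  have h1 := Real.log_le_self hs
  have h2 := Real.neg_inv_le_log hs
  have : (0:ℝ) ≤ s⁻¹ := inv_nonneg.2 hs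
  rw [abs_le]; constructor <;> linarith

lemma aux_mul_log_le {t : ℝ} (ht : 0 ≤ t) : |t * Real.log t| ≤ 1 + t ^ 2 := by
  rcases ht.eq_or_lt with h | h
  · simp [← h]
  rcases le_or_gt t 1 with h1 | h1
  · have hinv : Real.log t⁻¹ ≤ t⁻¹ - 1 := Real.log_le_sub_one_of_pos (inv_pos.2 h)
    rw [Real.log_inv] at hinv
    have hl0 : Real.log t ≤ 0 := Real.log_nonpos ht h1
    rw [abs_of_nonpos (mul_nonpos_of_nonneg_of_nonpos ht hl0)]
    have : t * (-Real.log t) ≤ t * (t⁻¹ - 1) :=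
      mul_le_mul_of_nonneg_left (by linarith) ht
    have htt : t * t⁻¹ = 1 := mul_inv_cancel₀ h.ne'
    nlinarith [sq_nonneg t]
  · have hl := Real.log_le_sub_one_of_pos h
    have hl0 : 0 ≤ Real.log t := Real.log_nonneg h1.le
    rw [abs_of_nonneg (mul_nonneg ht hl0)]
    nlinarith

lemma aux_mul_sq_log_le {t : ℝ} (ht : 0 ≤ t) : t * (Real.log t) ^ 2 ≤ 12 * (1 + t ^ 2) := by
  rcases ht.eq_or_lt with h | h
  · simp [← h]
  set u := Real.sqrt t with hu
  have hu0 : 0 < u := Real.sqrt_pos.2 h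
  have huu : u * u = t := Real.mul_self_sqrt ht
  have hlog : Real.log t = 2 * Real.log u := by
    rw [hu, Real.log_sqrt ht]; ring
  have habs : |Real.log u| ≤ u + u⁻¹ := abs_log_le_add_inv hu0.le
  have hsq : (Real.log u) ^ 2 ≤ (u + u⁻¹) ^ 2 :=
    sq_le_sq' (by linarith [abs_le.1 habs]) (abs_le.1 habs).2
  have huv : u * u⁻¹ = 1 := mul_inv_cancel₀ hu0.ne'
  have hv0 : 0 ≤ u⁻¹ := inv_nonneg.2 hu0.le
  rw [hlog]
  nlinarith [sq_nonneg (u*u - 1), sq_nonneg u,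
    mul_nonneg (mul_nonneg hu0.le hu0.le) (sq_nonneg (u + u⁻¹)), sq_nonneg (u*u*u⁻¹ - u)]

lemma variance_comp_map {Ω X : Type*} [MeasurableSpace Ω] [MeasurableSpace X]
    {μ : Measure Ω} {f : Ω → X} {g : X → ℝ} (hf : Measurable f) (hg : Measurable g) :
    variance (fun ω => g (f ω)) μ = variance g (μ.map f) := by
  have hint : (∫ ω, g (f ω) ∂μ) = ∫ x, g x ∂(μ.map f) := by
    rw [integral_map hf.aemeasurable hg.aestronglyMeasurable]
  unfold variance evariance
  rw [lintegral_map (by fun_prop) hf]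
  simp_rw [hint]


/-- KL divergence as `E_P[log (dP/dQ)]`. -/
noncomputable def klDiv {X : Type*} [MeasurableSpace X] (P Q : Measure X) : ℝ :=
  ∫ x, Real.log ((P.rnDeriv Q x).toReal) ∂P

/-- The variance of the NWJ estimator at the optimal critic,
`I_NWJ^{m,n} = E_{P_m}[log r* + 1] − E_{Q_n}[r*]` with `r* = dP/dQ`, computed from `m`
i.i.d. samples from `P` and `n` i.i.d. samples from `Q` (all mutually independent),
is at least `(exp(D_KL(P‖Q)) − 1)/n` for every `m`. -/
theorem stmt16 {X : Type*} [MeasurableSpace X] (P Q : Measure X)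
    [IsProbabilityMeasure P] [IsProbabilityMeasure Q] (hPQ : P ≪ Q)
    (hvar : Integrable (fun x => ((P.rnDeriv Q x).toReal) ^ 2) Q)
    {Ω : Type*} [MeasurableSpace Ω] (μ : Measure Ω) [IsProbabilityMeasure μ]
    (m n : ℕ) (hm : 0 < m) (hn : 0 < n)
    (Z : Fin m ⊕ Fin n → Ω → X)
    (hmeas : ∀ k, Measurable (Z k))
    (hindep : iIndepFun Z μ)
    (hlawP : ∀ i : Fin m, μ.map (Z (Sum.inl i)) = P)
    (hlawQ : ∀ j : Fin n, μ.map (Z (Sum.inr j)) = Q) :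
    (Real.exp (klDiv P Q) - 1) / n ≤
      variance (fun ω =>
        (m : ℝ)⁻¹ * ∑ i : Fin m,
            (Real.log ((P.rnDeriv Q (Z (Sum.inl i) ω)).toReal) + 1) -
          (n : ℝ)⁻¹ * ∑ j : Fin n, (P.rnDeriv Q (Z (Sum.inr j) ω)).toReal) μ := by
  classical
  set r : X → ℝ := fun x => (P.rnDeriv Q x).toReal with hrdef
  have hrm : Measurable r := (Measure.measurable_rnDeriv P Q).ennreal_toReal
  have hr0 : ∀ x, 0 ≤ r x := fun x => ENNReal.toReal_nonneg
  show (Real.exp (klDiv P Q) - 1) / n ≤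
      variance (fun ω =>
        (m : ℝ)⁻¹ * ∑ i : Fin m, (Real.log (r (Z (Sum.inl i) ω)) + 1) -
          (n : ℝ)⁻¹ * ∑ j : Fin n, r (Z (Sum.inr j) ω)) μ
  have hrQ1 : ∫ x, r x ∂Q = 1 := by
    rw [hrdef, Measure.integral_toReal_rnDeriv hPQ]; simp
  have hIint : Integrable (fun x => r x ^ 2) Q := hvar
  have hrQmem : MemLp r 2 Q := by
    rw [memLp_two_iff_integrable_sq hrm.aestronglyMeasurable]
    exact hIint
  have hrQint : Integrable r Q := hrQmem.integrable one_le_two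
  set I : ℝ := ∫ x, r x ^ 2 ∂Q with hIdef
  have hvarQ : variance r Q = I - 1 := by
    rw [variance_eq_sub hrQmem, hrQ1]
    have h2 : ∫ x, (r ^ 2) x ∂Q = I := by simp only [Pi.pow_apply]; exact hIdef.symm
    rw [h2]; ring
  have hI1 : 1 ≤ I := by
    have := variance_nonneg r Q
    linarith
  have hIpos : (0:ℝ) < I := lt_of_lt_of_le one_pos hI1
  have hrPint : Integrable r P := by
    rw [← MeasureTheory.integrable_rnDeriv_smul_iff hPQ]
    have : (fun x => (P.rnDeriv Q x).toReal • r x) = fun x => r x ^ 2 :=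
      funext fun x => by simp [hrdef, smul_eq_mul, sq]
    rw [this]; exact hIint
  have hrP : ∫ x, r x ∂P = I := by
    rw [← MeasureTheory.integral_rnDeriv_smul hPQ (f := r)]
    have : (fun x => (P.rnDeriv Q x).toReal • r x) = fun x => r x ^ 2 :=
      funext fun x => by simp [hrdef, smul_eq_mul, sq]
    rw [this]
  have hlogint : Integrable (fun x => Real.log (r x)) P := by
    rw [← MeasureTheory.integrable_rnDeriv_smul_iff hPQ]
    refine ((integrable_const (1:ℝ)).add hIint).mono'
      ((hrm.smul hrm.log).aestronglyMeasurable) ?_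
    filter_upwards with x
    rw [smul_eq_mul, Real.norm_eq_abs]
    exact aux_mul_log_le (hr0 x)
  have hlogsq : Integrable (fun x => (Real.log (r x)) ^ 2) P := by
    rw [← MeasureTheory.integrable_rnDeriv_smul_iff hPQ]
    refine (((integrable_const (1:ℝ)).add hIint).const_mul 12).mono'
      ((hrm.smul (hrm.log.pow_const 2)).aestronglyMeasurable) ?_
    filter_upwards with x
    have h := aux_mul_sq_log_le (hr0 x)
    have hn0 : 0 ≤ r x * Real.log (r x) ^ 2 := mul_nonneg (hr0 x) (sq_nonneg _)
    simpa [smul_eq_mul, Real.norm_eq_abs, abs_of_nonneg hn0, mul_add] using h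
  have hlogmem : MemLp (fun x => Real.log (r x)) 2 P := by
    rw [memLp_two_iff_integrable_sq (hrm.log.aestronglyMeasurable)]
    exact hlogsq
  -- Jensen-type bound: klDiv ≤ log I
  have hkl : klDiv P Q ≤ Real.log I := by
    have hrpos : ∀ᵐ x ∂P, 0 < r x := by
      filter_upwards [Measure.rnDeriv_pos hPQ, hPQ.ae_le (Measure.rnDeriv_lt_top P Q)]
        with x hx1 hx2
      exact ENNReal.toReal_pos hx1.ne' hx2.ne
    have hptw : ∀ᵐ x ∂P, Real.log (r x) ≤ r x / I + (Real.log I - 1) := by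
      filter_upwards [hrpos] with x hx
      have h := Real.log_le_sub_one_of_pos (div_pos hx hIpos)
      rw [Real.log_div hx.ne' hIpos.ne'] at h
      linarith
    have hgint : Integrable (fun x => r x / I + (Real.log I - 1)) P :=
      (hrPint.div_const I).add (integrable_const _)
    have hle := integral_mono_ae (g := fun x => r x / I + (Real.log I - 1))
      hlogint hgint hptw
    have hR : ∫ x, (r x / I + (Real.log I - 1)) ∂P = Real.log I := by
      rw [integral_add (hrPint.div_const I) (integrable_const _), integral_div, hrP,
        integral_const]
      have hII : I / I = 1 := div_self hIpos.ne'
      simp [hII]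
    rw [hR] at hle
    exact hle
  have hexp : Real.exp (klDiv P Q) ≤ I :=
    le_trans (Real.exp_le_exp.2 hkl) (le_of_eq (Real.exp_log hIpos))
  -- probabilistic part
  set L : Fin m → Ω → ℝ := fun i ω => Real.log (r (Z (Sum.inl i) ω)) + 1 with hLdef
  set R : Fin n → Ω → ℝ := fun j ω => r (Z (Sum.inr j) ω) with hRdef
  set A : Ω → ℝ := fun ω => (m : ℝ)⁻¹ * ∑ i : Fin m, L i ω with hAdef
  set B : Ω → ℝ := fun ω => (n : ℝ)⁻¹ * ∑ j : Fin n, R j ω with hBdef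
  have hmemL : ∀ i, MemLp (L i) 2 μ := by
    intro i
    have h1 : MemLp (fun ω => Real.log (r (Z (Sum.inl i) ω))) 2 μ := by
      have := (memLp_map_measure_iff
        (g := fun x => Real.log (r x)) (f := Z (Sum.inl i))
        (by rw [hlawP i]; exact hrm.log.aestronglyMeasurable)
        (hmeas _).aemeasurable).1 (by rw [hlawP i]; exact hlogmem)
      exact this
    exact h1.add (memLp_const 1)
  have hmemR : ∀ j, MemLp (R j) 2 μ := by
    intro j
    exact (memLp_map_measure_iff (g := r) (f := Z (Sum.inr j))
      (by rw [hlawQ j]; exact hrm.aestronglyMeasurable)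
      (hmeas _).aemeasurable).1 (by rw [hlawQ j]; exact hrQmem)
  have hmemA : MemLp A 2 μ := by
    have h1 : MemLp (fun ω => ∑ i : Fin m, L i ω) 2 μ := by
      have hs := memLp_finset_sum' (μ := μ) (p := 2) Finset.univ (fun i _ => hmemL i)
      have heq : (∑ i : Fin m, L i) = fun ω => ∑ i : Fin m, L i ω := by
        funext ω; simp
      rw [← heq]; exact hs
    exact h1.const_mul _
  have hmemB : MemLp B 2 μ := by
    have h1 : MemLp (fun ω => ∑ j : Fin n, R j ω) 2 μ := by
      have hs := memLp_finset_sum' (μ := μ) (p := 2) Finset.univ (fun j _ => hmemR j)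
      have heq : (∑ j : Fin n, R j) = fun ω => ∑ j : Fin n, R j ω := by
        funext ω; simp
      rw [← heq]; exact hs
    exact h1.const_mul _
  -- independence of A and B
  have hAB : IndepFun A B μ := by
    set S : Finset (Fin m ⊕ Fin n) := Finset.univ.image Sum.inl with hSdef
    set T : Finset (Fin m ⊕ Fin n) := Finset.univ.image Sum.inr with hTdef
    have hST : Disjoint S T := by
      rw [Finset.disjoint_left]
      rintro k hk hk'
      simp only [hSdef, hTdef, Finset.mem_image, Finset.mem_univ, true_and] at hk hk'
      obtain ⟨i, rfl⟩ := hk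
      obtain ⟨j, h⟩ := hk'
      simp at h
    have hbase := hindep.indepFun_finset S T hST hmeas
    have hSmem : ∀ i : Fin m, (Sum.inl i : Fin m ⊕ Fin n) ∈ S := fun i => by
      simp [hSdef]
    have hTmem : ∀ j : Fin n, (Sum.inr j : Fin m ⊕ Fin n) ∈ T := fun j => by
      simp [hTdef]
    have hφ : Measurable (fun v : S → X =>
        (m : ℝ)⁻¹ * ∑ i : Fin m, (Real.log (r (v ⟨Sum.inl i, hSmem i⟩)) + 1)) := by
      apply Measurable.const_mul
      apply Finset.measurable_sum
      intro i _
      exact (hrm.log.comp (measurable_pi_apply _)).add_const 1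
    have hψ : Measurable (fun v : T → X =>
        (n : ℝ)⁻¹ * ∑ j : Fin n, r (v ⟨Sum.inr j, hTmem j⟩)) := by
      apply Measurable.const_mul
      apply Finset.measurable_sum
      intro j _
      exact hrm.comp (measurable_pi_apply _)
    exact hbase.comp hφ hψ
  -- variance of B
  have hvarRj : ∀ j, variance (R j) μ = I - 1 := by
    intro j
    have h := variance_comp_map (μ := μ) (hmeas (Sum.inr j)) hrm
    rw [hlawQ j, hvarQ] at h
    exact h
  have hindepR : Set.Pairwise ↑(Finset.univ : Finset (Fin n))
      fun j j' => IndepFun (R j) (R j') μ := by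
    intro j _ j' _ hjj'
    have h := (hindep.indepFun (show (Sum.inr j : Fin m ⊕ Fin n) ≠ Sum.inr j' by
      simpa using hjj')).comp hrm hrm
    exact h
  have hvarB : variance B μ = (I - 1) / n := by
    have hsum : variance (∑ j : Fin n, R j) μ = ∑ j : Fin n, variance (R j) μ :=
      IndepFun.variance_sum (fun j _ => hmemR j) hindepR
    have hBeq : B = fun ω => (n : ℝ)⁻¹ * (∑ j : Fin n, R j) ω := by
      funext ω; simp [hBdef]
    rw [hBeq, variance_const_mul, hsum]
    simp only [hvarRj, Finset.sum_const, Finset.card_univ, Fintype.card_fin, nsmul_eq_mul]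
    have hn0 : (n:ℝ) ≠ 0 := Nat.cast_ne_zero.2 hn.ne'
    field_simp
  -- total variance
  have hmemB' : MemLp (fun ω => (-1 : ℝ) * B ω) 2 μ := hmemB.const_mul _
  have hAB' : IndepFun A (fun ω => (-1 : ℝ) * B ω) μ :=
    hAB.comp measurable_id (measurable_id.const_mul (-1))
  have hFeq : (fun ω =>
        (m : ℝ)⁻¹ * ∑ i : Fin m,
            (Real.log (r (Z (Sum.inl i) ω)) + 1) -
          (n : ℝ)⁻¹ * ∑ j : Fin n, r (Z (Sum.inr j) ω)) =
      A + fun ω => (-1 : ℝ) * B ω := by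
    funext ω
    simp only [Pi.add_apply, hAdef, hBdef, hLdef, hRdef]
    ring
  rw [hFeq, hAB'.variance_add hmemA hmemB']
  have hvA : 0 ≤ variance A μ := variance_nonneg _ _
  have hbound : (Real.exp (klDiv P Q) - 1) / n ≤ (I - 1) / n := by
    gcongr
  have hB' : variance (fun ω => (-1:ℝ) * B ω) μ = variance B μ := by
    rw [variance_const_mul]; norm_num
  rw [hB', hvarB]
  linarith
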